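/- Let C ⊆ ℝ^m be a closed pointed convex cone with nonempty interior and C ≠ ℝ^m, and let x, y belong to the topological interior of C. Then ⟨f,x⟩ > 0 and ⟨f,y⟩ > 0 for every nonzero f ∈ C*, and Yamada's supporting-hyperplane formula holds: d_h(x,y) = (1/2)·sup{log(⟨f,x⟩/⟨f,y⟩) : f ∈ C*, f ≠ 0} + (1/2)·sup{log(⟨f,y⟩/⟨f,x⟩) : f ∈ C*, f ≠ 0}. (Here ⟨f,z⟩/‖f‖ is the distance from z to the supporting hyperplane {w : ⟨f,w⟩ = 0} of C, so this expresses the Hilbert metric via ratios of distances to supporting hyperplanes.) -/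

import Mathlib

open scoped RealInnerProductSpace

/-- Birkhoff coefficient `M(x,y) = inf {λ ≥ 0 : λ•y - x ∈ C}`. -/
noncomputable def Mcoef {m : ℕ} (C : Set (EuclideanSpace ℝ (Fin m)))
    (x y : EuclideanSpace ℝ (Fin m)) : ℝ :=
  sInf {l : ℝ | 0 ≤ l ∧ l • y - x ∈ C}

/-- Birkhoff coefficient `m(x,y) = sup {λ ≥ 0 : x - λ•y ∈ C}`. -/
noncomputable def mcoef {m : ℕ} (C : Set (EuclideanSpace ℝ (Fin m)))
    (x y : EuclideanSpace ℝ (Fin m)) : ℝ :=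
  sSup {l : ℝ | 0 ≤ l ∧ x - l • y ∈ C}

/-- Birkhoff's version of the Hilbert metric `d_h(x,y) = (1/2)·log(M(x,y)/m(x,y))`. -/
noncomputable def dh {m : ℕ} (C : Set (EuclideanSpace ℝ (Fin m)))
    (x y : EuclideanSpace ℝ (Fin m)) : ℝ :=
  (1 / 2) * Real.log (Mcoef C x y / mcoef C x y)

/-- The dual cone `C* = {f : ⟨f,z⟩ ≥ 0 for all z ∈ C}`. -/
def dualCone {m : ℕ} (C : Set (EuclideanSpace ℝ (Fin m))) :
    Set (EuclideanSpace ℝ (Fin m)) :=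
  {f | ∀ z ∈ C, 0 ≤ ⟪f, z⟫}

/-- From an interior point we can subtract a small positive multiple of any vector
and stay in the set. -/
lemma aux_interior_sub_smul {m : ℕ} {C : Set (EuclideanSpace ℝ (Fin m))}
    {u : EuclideanSpace ℝ (Fin m)} (v : EuclideanSpace ℝ (Fin m)) (hu : u ∈ interior C) :
    ∃ t : ℝ, 0 < t ∧ u - t • v ∈ C := by
  obtain ⟨ε, hε, hball⟩ := Metric.isOpen_iff.1 isOpen_interior u hu
  refine ⟨ε / (2 * (‖v‖ + 1)), by positivity, ?_⟩
  refine interior_subset (hball ?_)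
  rw [Metric.mem_ball, dist_eq_norm]
  have h1 : u - (ε / (2 * (‖v‖ + 1))) • v - u = -((ε / (2 * (‖v‖ + 1))) • v) := by abel
  rw [h1, norm_neg, norm_smul, Real.norm_of_nonneg (by positivity)]
  have hv : (0:ℝ) ≤ ‖v‖ := norm_nonneg v
  rw [div_mul_eq_mul_div, div_lt_iff₀ (by positivity)]
  nlinarith

/-- Yamada'"'"'s supporting-hyperplane formula for the Hilbert metric on a closed pointed
convex cone with nonempty interior: for `x, y` interior points,
`d_h(x,y) = (1/2)·sup{log(⟨f,x⟩/⟨f,y⟩)} + (1/2)·sup{log(⟨f,y⟩/⟨f,x⟩)}`, the suprema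
running over nonzero `f ∈ C*`. -/
theorem stmt8 {m : ℕ} (C : Set (EuclideanSpace ℝ (Fin m)))
    (hadd : ∀ a ∈ C, ∀ b ∈ C, a + b ∈ C)
    (hsmul : ∀ c : ℝ, 0 < c → ∀ a ∈ C, c • a ∈ C)
    (hpointed : ∀ z ∈ C, -z ∈ C → z = 0)
    (hclosed : IsClosed C) (hint : (interior C).Nonempty) (hne : C ≠ Set.univ)
    (x y : EuclideanSpace ℝ (Fin m)) (hx : x ∈ interior C) (hy : y ∈ interior C) :
    (∀ f ∈ dualCone C, f ≠ 0 → 0 < ⟪f, x⟫) ∧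
    (∀ f ∈ dualCone C, f ≠ 0 → 0 < ⟪f, y⟫) ∧
    dh C x y =
      (1 / 2) * sSup {r : ℝ | ∃ f ∈ dualCone C, f ≠ 0 ∧ r = Real.log (⟪f, x⟫ / ⟪f, y⟫)} +
      (1 / 2) * sSup {r : ℝ | ∃ f ∈ dualCone C, f ≠ 0 ∧ r = Real.log (⟪f, y⟫ / ⟪f, x⟫)} := by
  classical
  -- the cone as a ConvexCone
  let K : ConvexCone ℝ (EuclideanSpace ℝ (Fin m)) :=
    { carrier := C
      smul_mem' := fun {c} hc {a} ha => hsmul c hc a ha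
      add_mem' := fun a ha b hb => hadd a ha b hb }
  have hCne : C.Nonempty := by
    obtain ⟨w, hw⟩ := hint
    exact ⟨w, interior_subset hw⟩
  have hmem : ∀ z, z ∈ C ↔ ∀ f ∈ dualCone C, 0 ≤ ⟪f, z⟫ := by
    intro z
    constructor
    · intro hz f hf; exact hf z hz
    · intro h
      by_contra hzC
      obtain ⟨P, hP⟩ : ∃ P : ProperCone ℝ (EuclideanSpace ℝ (Fin m)),
          ((P : ConvexCone ℝ (EuclideanSpace ℝ (Fin m)))) = K := CanLift.prf K ⟨hCne, hclosed⟩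
      have hPC : ∀ w, w ∈ P ↔ w ∈ C := fun w => by
        have := congrArg (fun D : ConvexCone ℝ (EuclideanSpace ℝ (Fin m)) => w ∈ D) hP
        simpa [K] using this
      obtain ⟨f, hf, hfz⟩ := P.hyperplane_separation' (x₀ := z) (by rwa [hPC])
      have h2 := h f (fun w hw => by rw [real_inner_comm]; exact hf w ((hPC w).2 hw))
      rw [real_inner_comm] at h2
      linarith
  -- positivity on the interior
  have hpos : ∀ w ∈ interior C, ∀ f ∈ dualCone C, f ≠ 0 → 0 < ⟪f, w⟫ := by
    intro w hw f hf hf0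
    obtain ⟨t, ht0, htC⟩ := aux_interior_sub_smul f hw
    have h1 : 0 ≤ ⟪f, w - t • f⟫ := hf _ htC
    rw [inner_sub_right, inner_smul_right, real_inner_self_eq_norm_sq] at h1
    have hfn : 0 < ‖f‖ := norm_pos_iff.2 hf0
    nlinarith [mul_pos ht0 (pow_pos hfn 2)]
  have hxpos : ∀ f ∈ dualCone C, f ≠ 0 → 0 < ⟪f, x⟫ := fun f hf h0 => hpos x hx f hf h0
  have hypos : ∀ f ∈ dualCone C, f ≠ 0 → 0 < ⟪f, y⟫ := fun f hf h0 => hpos y hy f hf h0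
  refine ⟨hxpos, hypos, ?_⟩
  -- existence of a nonzero dual vector
  have hex : ∃ f ∈ dualCone C, f ≠ 0 := by
    by_contra h
    push_neg at h
    apply hne
    ext z
    simp only [Set.mem_univ, iff_true]
    refine (hmem z).2 (fun f hf => ?_)
    by_cases h0 : f = 0
    · simp [h0]
    · exact absurd (h f hf) (by simpa using h0)
  -- the set of ratios
  set R : Set ℝ := {r | ∃ f ∈ dualCone C, f ≠ 0 ∧ r = ⟪f, x⟫ / ⟪f, y⟫} with hRdef
  have hRne : R.Nonempty := by
    obtain ⟨f, hf, hf0⟩ := hex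
    exact ⟨⟪f, x⟫ / ⟪f, y⟫, f, hf, hf0, rfl⟩
  -- upper bound for R
  obtain ⟨t₀, ht₀, ht₀C⟩ := aux_interior_sub_smul x hy
  have hl0 : (1 / t₀) • (y - t₀ • x) ∈ C := hsmul _ (by positivity) _ ht₀C
  have hl0' : (1 / t₀) • y - x ∈ C := by
    have : (1 / t₀) • (y - t₀ • x) = (1 / t₀) • y - x := by
      rw [smul_sub, smul_smul]
      rw [one_div_mul_cancel (ne_of_gt ht₀), one_smul]
    rwa [this] at hl0
  have hub : ∀ r ∈ R, r ≤ 1 / t₀ := by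
    rintro r ⟨f, hf, hf0, rfl⟩
    have h1 : 0 ≤ ⟪f, (1 / t₀) • y - x⟫ := hf _ hl0'
    rw [inner_sub_right, inner_smul_right] at h1
    rw [div_le_iff₀ (hypos f hf hf0)]
    linarith
  have hRbdd : BddAbove R := ⟨1 / t₀, hub⟩
  -- lower bound for R
  obtain ⟨t₁, ht₁, ht₁C⟩ := aux_interior_sub_smul y hx
  have hlb : ∀ r ∈ R, t₁ ≤ r := by
    rintro r ⟨f, hf, hf0, rfl⟩
    have h1 : 0 ≤ ⟪f, x - t₁ • y⟫ := hf _ ht₁C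
    rw [inner_sub_right, inner_smul_right] at h1
    rw [le_div_iff₀ (hypos f hf hf0)]
    linarith
  have hRbddb : BddBelow R := ⟨t₁, hlb⟩
  set MR : ℝ := sSup R with hMRdef
  set mR : ℝ := sInf R with hmRdef
  have hMRpos : 0 < MR := by
    obtain ⟨r, hr⟩ := hRne
    exact lt_of_lt_of_le ht₁ (le_trans (hlb r hr) (le_csSup hRbdd hr))
  have hmRpos : 0 < mR := lt_of_lt_of_le ht₁ (le_csInf hRne hlb)
  have hmMR : mR ≤ MR := csInf_le_csSup hRne hRbddb hRbdd
  -- Mcoef = sSup R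
  have hA : {l : ℝ | 0 ≤ l ∧ l • y - x ∈ C} = Set.Ici MR := by
    ext l
    simp only [Set.mem_setOf_eq, Set.mem_Ici]
    constructor
    · rintro ⟨hl0, hlC⟩
      refine csSup_le hRne ?_
      rintro r ⟨f, hf, hf0, rfl⟩
      have h1 : 0 ≤ ⟪f, l • y - x⟫ := (hmem _).1 hlC f hf
      rw [inner_sub_right, inner_smul_right] at h1
      rw [div_le_iff₀ (hypos f hf hf0)]
      linarith
    · intro hl
      have hl0 : 0 ≤ l := le_trans hMRpos.le hl
      refine ⟨hl0, (hmem _).2 (fun f hf => ?_)⟩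
      by_cases h0 : f = 0
      · simp [h0]
      · have hr : ⟪f, x⟫ / ⟪f, y⟫ ≤ l :=
          le_trans (le_csSup hRbdd ⟨f, hf, h0, rfl⟩) hl
        rw [div_le_iff₀ (hypos f hf h0)] at hr
        rw [inner_sub_right, inner_smul_right]
        linarith
  have hM : Mcoef C x y = MR := by
    rw [Mcoef, hA, csInf_Ici]
  -- mcoef = sInf R
  have hB : {l : ℝ | 0 ≤ l ∧ x - l • y ∈ C} = Set.Icc 0 mR := by
    ext l
    simp only [Set.mem_setOf_eq, Set.mem_Icc]
    constructor
    · rintro ⟨hl0, hlC⟩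
      refine ⟨hl0, le_csInf hRne ?_⟩
      rintro r ⟨f, hf, hf0, rfl⟩
      have h1 : 0 ≤ ⟪f, x - l • y⟫ := (hmem _).1 hlC f hf
      rw [inner_sub_right, inner_smul_right] at h1
      rw [le_div_iff₀ (hypos f hf hf0)]
      linarith
    · rintro ⟨hl0, hl⟩
      refine ⟨hl0, (hmem _).2 (fun f hf => ?_)⟩
      by_cases h0 : f = 0
      · simp [h0]
      · have hr : l ≤ ⟪f, x⟫ / ⟪f, y⟫ :=
          le_trans hl (csInf_le hRbddb ⟨f, hf, h0, rfl⟩)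
        rw [le_div_iff₀ (hypos f hf h0)] at hr
        rw [inner_sub_right, inner_smul_right]
        linarith
  have hm : mcoef C x y = mR := by
    rw [mcoef, hB, csSup_Icc hmRpos.le]
  -- positivity of each ratio
  have hRpos : ∀ r ∈ R, 0 < r := fun r hr => lt_of_lt_of_le ht₁ (hlb r hr)
  -- first sup of logs
  set S1 : Set ℝ := {r : ℝ | ∃ f ∈ dualCone C, f ≠ 0 ∧ r = Real.log (⟪f, x⟫ / ⟪f, y⟫)} with hS1def
  set S2 : Set ℝ := {r : ℝ | ∃ f ∈ dualCone C, f ≠ 0 ∧ r = Real.log (⟪f, y⟫ / ⟪f, x⟫)} with hS2def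
  have hS1ne : S1.Nonempty := by
    obtain ⟨f, hf, hf0⟩ := hex
    exact ⟨_, f, hf, hf0, rfl⟩
  have hS2ne : S2.Nonempty := by
    obtain ⟨f, hf, hf0⟩ := hex
    exact ⟨_, f, hf, hf0, rfl⟩
  have hS1ub : ∀ r ∈ S1, r ≤ Real.log MR := by
    rintro r ⟨f, hf, hf0, rfl⟩
    have hρ : ⟪f, x⟫ / ⟪f, y⟫ ∈ R := ⟨f, hf, hf0, rfl⟩
    exact Real.log_le_log (hRpos _ hρ) (le_csSup hRbdd hρ)
  have hS2ub : ∀ r ∈ S2, r ≤ -Real.log mR := by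
    rintro r ⟨f, hf, hf0, rfl⟩
    have hρ : ⟪f, x⟫ / ⟪f, y⟫ ∈ R := ⟨f, hf, hf0, rfl⟩
    have h1 : Real.log (⟪f, y⟫ / ⟪f, x⟫) = -Real.log (⟪f, x⟫ / ⟪f, y⟫) := by
      rw [Real.log_div (ne_of_gt (hypos f hf hf0)) (ne_of_gt (hxpos f hf hf0)),
        Real.log_div (ne_of_gt (hxpos f hf hf0)) (ne_of_gt (hypos f hf hf0))]
      ring
    rw [h1, neg_le_neg_iff]
    exact Real.log_le_log hmRpos (csInf_le hRbddb hρ)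
  have hS1 : sSup S1 = Real.log MR := by
    refine le_antisymm (csSup_le hS1ne hS1ub) ?_
    have hb : MR ≤ Real.exp (sSup S1) := by
      refine csSup_le hRne (fun r hr => ?_)
      obtain ⟨f, hf, hf0, rfl⟩ := hr
      have h1 : Real.log (⟪f, x⟫ / ⟪f, y⟫) ≤ sSup S1 :=
        le_csSup ⟨Real.log MR, hS1ub⟩ ⟨f, hf, hf0, rfl⟩
      calc ⟪f, x⟫ / ⟪f, y⟫ = Real.exp (Real.log (⟪f, x⟫ / ⟪f, y⟫)) :=
            (Real.exp_log (hRpos _ ⟨f, hf, hf0, rfl⟩)).symm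
        _ ≤ Real.exp (sSup S1) := Real.exp_le_exp.2 h1
    calc Real.log MR ≤ Real.log (Real.exp (sSup S1)) := Real.log_le_log hMRpos hb
      _ = sSup S1 := Real.log_exp _
  have hS2 : sSup S2 = -Real.log mR := by
    refine le_antisymm (csSup_le hS2ne hS2ub) ?_
    have hb : Real.exp (-sSup S2) ≤ mR := by
      refine le_csInf hRne (fun r hr => ?_)
      obtain ⟨f, hf, hf0, rfl⟩ := hr
      have h1 : Real.log (⟪f, y⟫ / ⟪f, x⟫) ≤ sSup S2 :=
        le_csSup ⟨-Real.log mR, hS2ub⟩ ⟨f, hf, hf0, rfl⟩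
      have h2 : Real.log (⟪f, y⟫ / ⟪f, x⟫) = -Real.log (⟪f, x⟫ / ⟪f, y⟫) := by
        rw [Real.log_div (ne_of_gt (hypos f hf hf0)) (ne_of_gt (hxpos f hf hf0)),
          Real.log_div (ne_of_gt (hxpos f hf hf0)) (ne_of_gt (hypos f hf hf0))]
        ring
      rw [h2] at h1
      have h3 : -sSup S2 ≤ Real.log (⟪f, x⟫ / ⟪f, y⟫) := by linarith
      calc Real.exp (-sSup S2) ≤ Real.exp (Real.log (⟪f, x⟫ / ⟪f, y⟫)) :=
            Real.exp_le_exp.2 h3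
        _ = ⟪f, x⟫ / ⟪f, y⟫ := Real.exp_log (hRpos _ ⟨f, hf, hf0, rfl⟩)
    have h4 : -sSup S2 ≤ Real.log mR := by
      calc -sSup S2 = Real.log (Real.exp (-sSup S2)) := (Real.log_exp _).symm
        _ ≤ Real.log mR := Real.log_le_log (Real.exp_pos _) hb
    linarith
  rw [dh, hM, hm, hS1, hS2,
    Real.log_div (ne_of_gt hMRpos) (ne_of_gt hmRpos)]
  ring
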